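/- Let a, b > 0 and 0 < ν < τ ≤ 1/2. Then (a∇b - H_τ(a,b))/(τ(1-τ)) ≤ (a∇b - H_ν(a,b))/(ν(1-ν)), where a∇b = (a+b)/2 and H_t(a,b) = (a^t b^{1-t} + a^{1-t} b^t)/2. -/

import Mathlib

open Real Set

namespace HeinzAux

noncomputable def Lf (y : ℝ) : ℝ := Real.log (Real.sinh y) - Real.log y
noncomputable def Lf' (y : ℝ) : ℝ := Real.cosh y / Real.sinh y - y⁻¹

lemma Lf_hasDeriv {y : ℝ} (hy : 0 < y) : HasDerivAt Lf (Lf' y) y :=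
  ((Real.hasDerivAt_sinh y).log (ne_of_gt (Real.sinh_pos_iff.2 hy))).sub
    (Real.hasDerivAt_log (ne_of_gt hy))

lemma Lf'_hasDeriv {y : ℝ} (hy : 0 < y) : HasDerivAt Lf'
    ((Real.sinh y * Real.sinh y - Real.cosh y * Real.cosh y)/(Real.sinh y)^2 - (-(y^2)⁻¹)) y :=
  ((Real.hasDerivAt_cosh y).div (Real.hasDerivAt_sinh y) (ne_of_gt (Real.sinh_pos_iff.2 hy))).sub
    (hasDerivAt_inv (ne_of_gt hy))

lemma Lf_convex : ConvexOn ℝ (Set.Ioi 0) Lf := by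
  have hderiv : ∀ y ∈ Ioi (0:ℝ), deriv Lf y = Lf' y := fun y hy => (Lf_hasDeriv hy).deriv
  apply convexOn_of_deriv2_nonneg (convex_Ioi 0)
  · intro y hy
    exact ((Lf_hasDeriv hy).continuousAt).continuousWithinAt
  · rw [interior_Ioi]
    intro y hy
    exact (Lf_hasDeriv hy).differentiableAt.differentiableWithinAt
  · rw [interior_Ioi]
    intro y hy
    have hev : deriv Lf =ᶠ[nhds y] Lf' :=
      Filter.eventuallyEq_of_mem (isOpen_Ioi.mem_nhds hy) hderiv
    exact (((Lf'_hasDeriv hy).congr_of_eventuallyEq hev).differentiableAt).differentiableWithinAt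
  · rw [interior_Ioi]
    intro y hy
    have hev : deriv Lf =ᶠ[nhds y] Lf' :=
      Filter.eventuallyEq_of_mem (isOpen_Ioi.mem_nhds hy) hderiv
    have h2 : deriv (deriv Lf) y =
        (Real.sinh y * Real.sinh y - Real.cosh y * Real.cosh y)/(Real.sinh y)^2 - (-(y^2)⁻¹) := by
      rw [hev.deriv_eq]
      exact (Lf'_hasDeriv hy).deriv
    have : deriv^[2] Lf y = deriv (deriv Lf) y := by
      simp [Function.iterate_succ_apply', Function.iterate_zero_apply]
    rw [this, h2]
    have hy0 : (0:ℝ) < y := hy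
    have hs : (0:ℝ) < Real.sinh y := Real.sinh_pos_iff.2 hy
    have hys : y ≤ Real.sinh y := le_of_lt (Real.self_lt_sinh_iff.2 hy)
    have hcs : Real.cosh y * Real.cosh y - Real.sinh y * Real.sinh y = 1 := by
      have := Real.cosh_sq_sub_sinh_sq y
      nlinarith [this]
    have h1 : (y^2)⁻¹ ≥ ((Real.sinh y)^2)⁻¹ := by
      apply inv_anti₀ (by positivity)
      nlinarith [hys, hy0]
    have : (Real.sinh y * Real.sinh y - Real.cosh y * Real.cosh y)/(Real.sinh y)^2
        = -((Real.sinh y)^2)⁻¹ := by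
      rw [show Real.sinh y * Real.sinh y - Real.cosh y * Real.cosh y = -1 by linarith]
      field_simp
    rw [this]
    linarith

lemma key {p q r s : ℝ} (hp : 0 < p) (hpq : p < q) (hqr : q ≤ r) (hrs : r < s)
    (hsum : p + s = q + r) :
    Real.sinh q / q * (Real.sinh r / r) ≤ Real.sinh p / p * (Real.sinh s / s) := by
  set L : ℝ → ℝ := fun y => Real.log (Real.sinh y) - Real.log y with hL
  have hq0 : 0 < q := hp.trans hpq
  have hr0 : 0 < r := hq0.trans_le hqr
  have hs0 : 0 < s := hr0.trans hrs
  have hps : 0 < s - p := by linarith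
  set l : ℝ := (s - q)/(s - p) with hl
  have hl0 : 0 ≤ l := div_nonneg (by linarith) hps.le
  have hl1 : l ≤ 1 := by
    rw [div_le_one hps]; linarith
  have hqe : l * p + (1 - l) * s = q := by
    rw [hl, div_mul_eq_mul_div, one_sub_div hps.ne', div_mul_eq_mul_div, ← add_div,
      div_eq_iff hps.ne']; ring
  have hre : (1 - l) * p + l * s = r := by
    field_simp [hl]; nlinarith [hsum]
  have C : ConvexOn ℝ (Set.Ioi 0) L := Lf_convex
  have hl0' : (0:ℝ) ≤ 1 - l := by linarith
  have hab : l + (1 - l) = 1 := by ring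
  have hab' : (1 - l) + l = 1 := by ring
  have e1 : L q ≤ l * L p + (1 - l) * L s := by
    have h := C.2 (mem_Ioi.2 hp) (mem_Ioi.2 hs0) hl0 hl0' hab
    rw [smul_eq_mul, smul_eq_mul, smul_eq_mul, smul_eq_mul, hqe] at h
    exact h
  have e2 : L r ≤ (1 - l) * L p + l * L s := by
    have h := C.2 (mem_Ioi.2 hp) (mem_Ioi.2 hs0) hl0' hl0 hab'
    rw [smul_eq_mul, smul_eq_mul, smul_eq_mul, smul_eq_mul, hre] at h
    exact h
  have hsum2 : L q + L r ≤ L p + L s := by nlinarith [e1, e2]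
  have expL : ∀ y : ℝ, 0 < y → Real.exp (L y) = Real.sinh y / y := by
    intro y hy
    rw [hL]
    rw [Real.exp_sub, Real.exp_log (Real.sinh_pos_iff.2 hy), Real.exp_log hy]
  calc Real.sinh q / q * (Real.sinh r / r) = Real.exp (L q + L r) := by
        rw [Real.exp_add, expL q hq0, expL r hr0]
    _ ≤ Real.exp (L p + L s) := Real.exp_le_exp.2 hsum2
    _ = Real.sinh p / p * (Real.sinh s / s) := by
        rw [Real.exp_add, expL p hp, expL s hs0]

lemma core (m W ν τ : ℝ) (hν : 0 < ν) (hντ : ν < τ) (hτ : τ ≤ 1/2) :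
    2*Real.exp m*(Real.sinh (τ*W)*Real.sinh ((1-τ)*W))/(τ*(1-τ)) ≤
    2*Real.exp m*(Real.sinh (ν*W)*Real.sinh ((1-ν)*W))/(ν*(1-ν)) := by
  have hτ0 : 0 < τ := hν.trans hντ
  have hν1 : ν < 1 := by linarith
  have hτ1 : τ < 1 := by linarith
  rcases eq_or_ne W 0 with h|h
  · simp [h]
  · have hW : 0 < |W| := abs_pos.2 h
    have flip : ∀ t:ℝ, Real.sinh (t*W)*Real.sinh ((1-t)*W)
        = Real.sinh (t*|W|)*Real.sinh ((1-t)*|W|) := by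
      intro t
      rcases abs_cases W with ⟨hw,_⟩|⟨hw,_⟩
      · rw [hw]
      · rw [hw, show t * -W = -(t*W) by ring, show (1-t) * -W = -((1-t)*W) by ring,
          Real.sinh_neg, Real.sinh_neg]; ring
    have k := key (p := ν*|W|) (q := τ*|W|) (r := (1-τ)*|W|) (s := (1-ν)*|W|)
      (by positivity) (by nlinarith) (by nlinarith) (by nlinarith) (by ring)
    have e : ∀ t:ℝ, 0 < t → t < 1 →
        2*Real.exp m*(Real.sinh (t*W)*Real.sinh ((1-t)*W))/(t*(1-t))
        = (2*Real.exp m*|W|^2) * (Real.sinh (t*|W|)/(t*|W|) * (Real.sinh ((1-t)*|W|)/((1-t)*|W|))) := by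
      intro t ht ht1
      have h1t : (0:ℝ) < 1 - t := by linarith
      rw [flip t]
      rw [div_mul_div_comm, show (t*|W|) * ((1-t)*|W|) = (t*(1-t))*|W|^2 by ring]
      rw [← mul_div_assoc, div_eq_div_iff (by positivity) (by positivity)]
      ring
    rw [e τ hτ0 hτ1, e ν hν hν1]
    exact mul_le_mul_of_nonneg_left k (by positivity)

lemma numer (A B t : ℝ) :
    (Real.exp A + Real.exp B)/2 - (Real.exp (A*t + B*(1-t)) + Real.exp (A*(1-t) + B*t))/2
    = 2 * Real.exp ((A+B)/2) * (Real.sinh (t*((A-B)/2)) * Real.sinh ((1-t)*((A-B)/2))) := by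
  set M := Real.exp ((A+B)/2) with hM
  set U := Real.exp (t*((A-B)/2)) with hU
  set V := Real.exp ((1-t)*((A-B)/2)) with hV
  have hM0 : 0 < M := Real.exp_pos _
  have hU0 : 0 < U := Real.exp_pos _
  have hV0 : 0 < V := Real.exp_pos _
  have e1 : Real.exp A = M * (U * V) := by
    rw [hM, hU, hV, ← Real.exp_add, ← Real.exp_add]; congr 1; ring
  have e2 : Real.exp B = M / (U * V) := by
    rw [eq_div_iff (by positivity), hM, hU, hV, ← Real.exp_add, ← Real.exp_add]
    congr 1; ring
  have e3 : Real.exp (A*t + B*(1-t)) = M * U / V := by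
    rw [eq_div_iff hV0.ne', hM, hU, hV, ← Real.exp_add, ← Real.exp_add]
    congr 1; ring
  have e4 : Real.exp (A*(1-t) + B*t) = M * V / U := by
    rw [eq_div_iff hU0.ne', hM, hU, hV, ← Real.exp_add, ← Real.exp_add]
    congr 1; ring
  have s1 : Real.sinh (t*((A-B)/2)) = (U - U⁻¹)/2 := by
    rw [Real.sinh_eq, Real.exp_neg, hU]
  have s2 : Real.sinh ((1-t)*((A-B)/2)) = (V - V⁻¹)/2 := by
    rw [Real.sinh_eq, Real.exp_neg, hV]
  rw [e1, e2, e3, e4, s1, s2]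
  field_simp
  ring
end HeinzAux


open HeinzAux in
theorem heinz_quadratic_comparison_left (a b ν τ : ℝ) (ha : 0 < a) (hb : 0 < b)
    (hν : 0 < ν) (hντ : ν < τ) (hτ : τ ≤ 1/2) :
    ((a + b) / 2 - (a ^ τ * b ^ (1 - τ) + a ^ (1 - τ) * b ^ τ) / 2) / (τ * (1 - τ)) ≤
    ((a + b) / 2 - (a ^ ν * b ^ (1 - ν) + a ^ (1 - ν) * b ^ ν) / 2) / (ν * (1 - ν)) := by
  set A := Real.log a with hA
  set B := Real.log b with hB
  have ra : ∀ t : ℝ, a ^ t = Real.exp (A * t) := fun t => Real.rpow_def_of_pos ha t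
  have rb : ∀ t : ℝ, b ^ t = Real.exp (B * t) := fun t => Real.rpow_def_of_pos hb t
  have hab : ∀ t : ℝ, a ^ t * b ^ (1-t) + a ^ (1-t) * b ^ t
      = Real.exp (A*t + B*(1-t)) + Real.exp (A*(1-t) + B*t) := by
    intro t; rw [ra, ra, rb, rb, ← Real.exp_add, ← Real.exp_add]
  rw [hab, hab, show a + b = Real.exp A + Real.exp B by
    rw [hA, hB, Real.exp_log ha, Real.exp_log hb]]
  rw [numer, numer]
  exact core ((A+B)/2) ((A-B)/2) ν τ hν hντ hτ
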